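/- Let M be a hypersurface in a Riemannian manifold N admitting a torse-forming vector field P with generating form ω. With P = φη + V as above, the gradient of φ on M satisfies grad φ = φ ω♯_M − A(V), where ω♯_M is the tangential part of the metric dual of ω. -/
import Mathlib


/-- **Lemma 2.** Let `M` be a hypersurface in a Riemannian manifold `N`
admitting a torse-forming vector field `P` (`∇̄_X P = μ X + ω(X) P`) with generating
form `ω`.  With `P = φ η + V` (`φ = ⟨P,η⟩`, `V` tangent), the gradient of `φ` on `M`
satisfies `grad φ = φ ω♯_M − A(V)`, where `ω♯_M` is the tangential part of the metric
dual of `ω` and `A` is the shape operator. -/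
theorem lemma2_gradient_of_phi
    {M W : Type*} [AddCommGroup W] [Module ℝ W]
    (g : M → W →ₗ[ℝ] W →ₗ[ℝ] ℝ)
    (nabla : (M → W) → (M → W) → (M → W))
    (Dop : (M → W) → (M → ℝ) → (M → ℝ))
    (η P V gradphi ωM : M → W) (φ μ : M → ℝ) (ω : M → W →ₗ[ℝ] ℝ)
    (A : (M → W) → (M → W))
    -- the metric is symmetric, nondegenerate, and η is a unit normal
    (hsym : ∀ p v w, g p v w = g p w v)
    (hnd : ∀ p (w : W), (∀ u : W, g p w u = 0) → w = 0)
    (hη : ∀ p, g p (η p) (η p) = 1)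
    -- every tangent vector extends to a tangent vector field
    (hext : ∀ p (w : W), g p w (η p) = 0 →
        ∃ X : M → W, (∀ q, g q (X q) (η q) = 0) ∧ X p = w)
    -- decomposition P = φ η + V with φ = ⟨P,η⟩ and V tangent
    (hφ : ∀ p, φ p = g p (P p) (η p))
    (hPdec : ∀ p, P p = φ p • η p + V p)
    (hVtan : ∀ p, g p (V p) (η p) = 0)
    -- the shape operator is tangent-valued and self-adjoint
    (hAtan : ∀ X p, g p (A X p) (η p) = 0)
    (hAsym : ∀ X Y : M → W, ∀ p, g p (A X p) (Y p) = g p (X p) (A Y p))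
    -- Weingarten formula ∇̄_X η = -A(X) for X tangent to M
    (hWein : ∀ X : M → W, (∀ p, g p (X p) (η p) = 0) → ∀ p, nabla X η p = - A X p)
    -- P is torse-forming: ∇̄_X P = μ X + ω(X) P
    (hTF : ∀ X : M → W, (∀ p, g p (X p) (η p) = 0) →
        ∀ p, nabla X P p = μ p • X p + ω p (X p) • P p)
    -- compatibility of the connection with the metric
    (hcompat : ∀ (X Y Z : M → W) (p : M),
        Dop X (fun q => g q (Y q) (Z q)) p
          = g p (nabla X Y p) (Z p) + g p (Y p) (nabla X Z p))
    -- gradphi is the gradient of φ on M: a tangent field with ⟨grad φ, X⟩ = X(φ)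
    (hgradtan : ∀ p, g p (gradphi p) (η p) = 0)
    (hgrad : ∀ X : M → W, (∀ p, g p (X p) (η p) = 0) →
        ∀ p, g p (gradphi p) (X p) = Dop X φ p)
    -- ωM is the tangential part ω♯_M of the metric dual of ω
    (hωMtan : ∀ p, g p (ωM p) (η p) = 0)
    (hωM : ∀ X : M → W, (∀ p, g p (X p) (η p) = 0) →
        ∀ p, g p (ωM p) (X p) = ω p (X p))
    (p : M) :
    gradphi p = φ p • ωM p - A V p := by
  -- key computation for tangent vectors
  have key : ∀ w : W, g p w (η p) = 0 →
      g p (gradphi p) w = g p (φ p • ωM p - A V p) w := by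
    intro w hw
    obtain ⟨X, hX, hXp⟩ := hext p w hw
    have h1 : g p (gradphi p) (X p) = Dop X φ p := hgrad X hX p
    have hφf : φ = fun q => g q (P q) (η q) := funext hφ
    have h2 : Dop X φ p = g p (nabla X P p) (η p) + g p (P p) (nabla X η p) := by
      rw [hφf]; exact hcompat X P η p
    have h3 : nabla X P p = μ p • X p + ω p (X p) • P p := hTF X hX p
    have h4 : nabla X η p = - A X p := hWein X hX p
    have h5 : g p (nabla X P p) (η p) = ω p (X p) * φ p := by
      rw [h3]
      simp [hX p, (hφ p).symm]
    have hηA : g p (η p) (A X p) = 0 := by rw [hsym]; exact hAtan X p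
    have hVA : g p (V p) (A X p) = g p (A V p) (X p) := by
      rw [hsym p (V p) (A X p), hAsym X V p, hsym]
    have h6 : g p (P p) (nabla X η p) = - g p (A V p) (X p) := by
      rw [h4, hPdec p]
      simp [hηA, hVA]
    have h7 : g p (gradphi p) (X p)
        = φ p * ω p (X p) - g p (A V p) (X p) := by
      rw [h1, h2, h5, h6]; ring
    have h8 : g p (φ p • ωM p - A V p) (X p)
        = φ p * ω p (X p) - g p (A V p) (X p) := by
      simp [hωM X hX p]
    rw [← hXp]; rw [h7, h8]
  -- tangency of both sides
  have hrhstan : g p (φ p • ωM p - A V p) (η p) = 0 := by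
    simp [hωMtan p, hAtan V p]
  have main : ∀ u : W, g p (gradphi p) u = g p (φ p • ωM p - A V p) u := by
    intro u
    have hu : u = g p u (η p) • η p + (u - g p u (η p) • η p) := by abel
    have ht : g p (u - g p u (η p) • η p) (η p) = 0 := by
      simp [hη p, hsym p u (η p)]
    rw [hu]
    rw [map_add, map_add, map_smul, map_smul, hgradtan p, hrhstan,
      key _ ht]
  have : gradphi p - (φ p • ωM p - A V p) = 0 := by
    apply hnd p
    intro u
    rw [map_sub]
    simp [main u]
  exact sub_eq_zero.mp this
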